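/- Let A be a complex Banach *-algebra with identity, let a, b ∈ A have generalized core-EP inverses with a ≤^⊕ b (a a^⊕ = b a^⊕ and a^⊕ a = a^⊕ b), and let p = a a^⊕. Then the corner element (1-p) b (1-p) has a generalized core-EP inverse in the Banach *-algebra (1-p) A (1-p) (with unit 1-p). -/

import Mathlib

open Filter Topology

variable {A : Type*} [NormedRing A] [StarRing A] [NormedAlgebra ℂ A] [StarModule ℂ A]
  [CompleteSpace A]

/-- quasinilpotent: `lim ‖z^n‖^(1/n) = 0` -/
def IsQNil (z : A) : Prop :=
  Tendsto (fun n : ℕ => ‖z ^ n‖ ^ ((1 : ℝ) / n)) atTop (𝓝 0)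

/-- generalized Drazin inverse -/
def IsGD (a x : A) : Prop :=
  a * x ^ 2 = x ∧ a * x = x * a ∧ IsQNil (a - a ^ 2 * x)

/-- generalized core-EP inverse -/
def IsGCEP (a x : A) : Prop :=
  x = a * x ^ 2 ∧ star (a * x) = a * x ∧
    Tendsto (fun n : ℕ => ‖a ^ n - x * a ^ (n + 1)‖ ^ ((1 : ℝ) / n)) atTop (𝓝 0)

lemma aux_vanish {u : A} {f : ℕ → ℝ}
    (hf : Tendsto f atTop (𝓝 0)) (hu : ∀ n, ‖u‖ ≤ f n) : u = 0 := by
  have h0 : ‖u‖ ≤ 0 :=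
    le_of_tendsto_of_tendsto' (tendsto_const_nhds : Tendsto (fun _ : ℕ => ‖u‖) atTop _) hf hu
  simpa using h0

lemma aux_smallpow {Z : ℕ → ℝ}
    (hZ : Tendsto (fun n : ℕ => Z n ^ ((1 : ℝ) / n)) atTop (𝓝 0)) (hZ0 : ∀ n, 0 ≤ Z n)
    {r : ℝ} (hr : 0 ≤ r) :
    Tendsto (fun n : ℕ => Z n * r ^ n) atTop (𝓝 0) := by
  have hε : (0 : ℝ) < (2 * (r + 1))⁻¹ := by positivity
  have hev : ∀ᶠ n : ℕ in atTop, Z n ^ ((1 : ℝ) / n) < (2 * (r + 1))⁻¹ :=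
    hZ.eventually_lt_const hε
  apply squeeze_zero' (g := fun n : ℕ => (1 / 2 : ℝ) ^ n)
  · exact Eventually.of_forall fun n => mul_nonneg (hZ0 n) (pow_nonneg hr n)
  · filter_upwards [hev, eventually_ge_atTop 1] with n hlt hn
    have hn0 : ((n : ℝ)) ≠ 0 := Nat.cast_ne_zero.mpr (by omega)
    have hZn : Z n = (Z n ^ ((1 : ℝ) / n)) ^ n := by
      rw [← Real.rpow_natCast (Z n ^ ((1 : ℝ) / n)) n, ← Real.rpow_mul (hZ0 n), one_div,
        inv_mul_cancel₀ hn0, Real.rpow_one]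
    have h1 : Z n ≤ ((2 * (r + 1))⁻¹) ^ n := by
      rw [hZn]
      exact pow_le_pow_left₀ (Real.rpow_nonneg (hZ0 n) _) hlt.le n
    calc Z n * r ^ n ≤ ((2 * (r + 1))⁻¹) ^ n * (r + 1) ^ n :=
          mul_le_mul h1 (pow_le_pow_left₀ hr (by linarith) n) (pow_nonneg hr n)
            (pow_nonneg hε.le n)
      _ = ((2 * (r + 1))⁻¹ * (r + 1)) ^ n := (mul_pow _ _ _).symm
      _ = (1 / 2 : ℝ) ^ n := by
          congr 1
          have h2 : (2 : ℝ) * (r + 1) ≠ 0 := by positivity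
          field_simp
  · exact tendsto_pow_atTop_nhds_zero_of_lt_one (by norm_num) (by norm_num)

lemma aux_engine {Z : ℕ → ℝ}
    (hZ : Tendsto (fun n : ℕ => Z n ^ ((1 : ℝ) / n)) atTop (𝓝 0)) (hZ0 : ∀ n, 0 ≤ Z n)
    {r : ℝ} (hr : 0 ≤ r) (C : ℝ) (s : ℕ) :
    Tendsto (fun n : ℕ => C * (Z (n + s) * r ^ (n + s))) atTop (𝓝 0) := by
  have h := (aux_smallpow hZ hZ0 hr).comp (tendsto_add_atTop_nat s)
  have h2 := h.const_mul C
  simpa [Function.comp] using h2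

lemma aux_vanish_pattern {u : A} {Z : ℕ → ℝ}
    (hZ : Tendsto (fun n : ℕ => Z n ^ ((1 : ℝ) / n)) atTop (𝓝 0)) (hZ0 : ∀ n, 0 ≤ Z n)
    {r : ℝ} (hr : 0 ≤ r) (C : ℝ) (s : ℕ)
    (hu : ∀ n : ℕ, ‖u‖ ≤ C * (Z (n + s) * r ^ (n + s))) : u = 0 :=
  aux_vanish (aux_engine hZ hZ0 hr C s) hu

theorem stmt12 (a b ag bg : A) (ha : IsGCEP a ag) (hb : IsGCEP b bg)
    (h1 : a * ag = b * ag) (h2 : ag * a = ag * b) :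
    ∃ w : A, (1 - a * ag) * w * (1 - a * ag) = w ∧
      IsGCEP ((1 - a * ag) * b * (1 - a * ag)) w := by
  obtain ⟨ha1, ha2, ha3⟩ := ha
  obtain ⟨hb1, hb2, hb3⟩ := hb
  set p := a * ag with hpdef
  set q := b * bg with hqdef
  have hM1 : (1 : ℝ) ≤ ‖ag‖ + 1 := by linarith [norm_nonneg ag]
  set M : ℝ := ‖ag‖ + 1 with hMdef
  have hM0 : (0 : ℝ) ≤ M := by linarith
  have hagp : ∀ k m : ℕ, k + 1 ≤ m → ‖ag ^ (k + 1)‖ ≤ M ^ m := by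
    intro k m hkm
    calc ‖ag ^ (k + 1)‖ ≤ ‖ag‖ ^ (k + 1) := norm_pow_le' ag k.succ_pos
      _ ≤ M ^ (k + 1) := pow_le_pow_left₀ (norm_nonneg _) (by rw [hMdef]; linarith) _
      _ ≤ M ^ m := pow_le_pow_right₀ hM1 hkm
  have hbd : ∀ (v : A) (k m : ℕ), k + 1 ≤ m → ‖v * ag ^ (k + 1)‖ ≤ ‖v‖ * M ^ m :=
    fun v k m h =>
      le_trans (norm_mul_le _ _) (mul_le_mul_of_nonneg_left (hagp k m h) (norm_nonneg v))
  -- basic algebraic identities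
  have hpag : p * ag = ag := by rw [hpdef, mul_assoc, ← pow_two, ← ha1]
  have hqbg : q * bg = bg := by rw [hqdef, mul_assoc, ← pow_two, ← hb1]
  have h1pag : (1 - p) * ag = 0 := by rw [sub_mul, one_mul, hpag, sub_self]
  have h1qbg : (1 - q) * bg = 0 := by rw [sub_mul, one_mul, hqbg, sub_self]
  have haag2 : a * ag ^ 2 = ag := ha1.symm
  have hbbg2 : b * bg ^ 2 = bg := hb1.symm
  have hbag2 : b * ag ^ 2 = ag := by
    rw [pow_two, ← mul_assoc, ← h1]
    exact hpag
  have hA : ∀ n : ℕ, a * ag ^ (n + 1 + 1) = ag ^ (n + 1) := by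
    intro n
    rw [show n + 1 + 1 = 2 + n from by omega, pow_add, ← mul_assoc, haag2]
    exact (pow_succ' ag n).symm
  have hB : ∀ n : ℕ, b * ag ^ (n + 1 + 1) = ag ^ (n + 1) := by
    intro n
    rw [show n + 1 + 1 = 2 + n from by omega, pow_add, ← mul_assoc, hbag2]
    exact (pow_succ' ag n).symm
  have hBg : ∀ n : ℕ, b * bg ^ (n + 1 + 1) = bg ^ (n + 1) := by
    intro n
    rw [show n + 1 + 1 = 2 + n from by omega, pow_add, ← mul_assoc, hbbg2]
    exact (pow_succ' bg n).symm
  have hpa : ∀ n : ℕ, a ^ (n + 1) * ag ^ (n + 1) = p := by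
    intro n
    induction n with
    | zero => rw [pow_one, pow_one]
    | succ n ih => rw [pow_succ a (n + 1), mul_assoc, hA n, ih]
  have hpb : ∀ n : ℕ, b ^ (n + 1) * ag ^ (n + 1) = p := by
    intro n
    induction n with
    | zero => rw [pow_one, pow_one]; exact h1.symm
    | succ n ih => rw [pow_succ b (n + 1), mul_assoc, hB n, ih]
  have hqb : ∀ n : ℕ, b ^ (n + 1) * bg ^ (n + 1) = q := by
    intro n
    induction n with
    | zero => rw [pow_one, pow_one]
    | succ n ih => rw [pow_succ b (n + 1), mul_assoc, hBg n, ih]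
  have hgenA : ∀ v : A, v * ag = 0 → ∀ m : ℕ, v * (a ^ m - ag * a ^ (m + 1)) = v * a ^ m := by
    intro v hv m
    rw [mul_sub, ← mul_assoc, hv, zero_mul, sub_zero]
  have hgenB : ∀ v : A, v * bg = 0 → ∀ m : ℕ, v * (b ^ m - bg * b ^ (m + 1)) = v * b ^ m := by
    intro v hv m
    rw [mul_sub, ← mul_assoc, hv, zero_mul, sub_zero]
  -- vanishing results via the limit conditions
  have hv1 : (1 - p) * p = 0 := by
    refine aux_vanish_pattern ha3 (fun n => norm_nonneg _) hM0 (‖(1 : A) - p‖) 1 fun n => ?_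
    have hid : (1 - p) * p = ((1 - p) * (a ^ (n + 1) - ag * a ^ (n + 1 + 1))) * ag ^ (n + 1) := by
      rw [hgenA (1 - p) h1pag (n + 1), mul_assoc, hpa n]
    calc ‖(1 - p) * p‖
        = ‖((1 - p) * (a ^ (n + 1) - ag * a ^ (n + 1 + 1))) * ag ^ (n + 1)‖ := by rw [hid]
      _ ≤ ‖(1 - p) * (a ^ (n + 1) - ag * a ^ (n + 1 + 1))‖ * M ^ (n + 1) :=
          hbd _ n (n + 1) le_rfl
      _ ≤ (‖(1 : A) - p‖ * ‖a ^ (n + 1) - ag * a ^ (n + 1 + 1)‖) * M ^ (n + 1) :=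
          mul_le_mul_of_nonneg_right (norm_mul_le _ _) (pow_nonneg hM0 _)
      _ = ‖(1 : A) - p‖ * (‖a ^ (n + 1) - ag * a ^ (n + 1 + 1)‖ * M ^ (n + 1)) := by ring
  have hppp : p * p = p := by
    have h := hv1
    rw [sub_mul, one_mul, sub_eq_zero] at h
    exact h.symm
  have hpe : p * (1 - p) = 0 := by rw [mul_sub, mul_one, hppp, sub_self]
  have h11 : (1 - p) * (1 - p) = 1 - p := by rw [mul_sub, mul_one, hv1, sub_zero]
  have hv2 : (1 - p) * (a * p) = 0 := by
    refine aux_vanish_pattern ha3 (fun n => norm_nonneg _) hM0 (‖(1 : A) - p‖) 2 fun n => ?_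
    show ‖(1 - p) * (a * p)‖ ≤
      ‖(1 : A) - p‖ * (‖a ^ (n + 1 + 1) - ag * a ^ (n + 1 + 1 + 1)‖ * M ^ (n + 1 + 1))
    have hid : (1 - p) * (a * p) =
        ((1 - p) * (a ^ (n + 1 + 1) - ag * a ^ (n + 1 + 1 + 1))) * ag ^ (n + 1) := by
      rw [hgenA (1 - p) h1pag (n + 1 + 1), mul_assoc, pow_succ' a (n + 1),
        mul_assoc a (a ^ (n + 1)) (ag ^ (n + 1)), hpa n]
    calc ‖(1 - p) * (a * p)‖
        = ‖((1 - p) * (a ^ (n + 1 + 1) - ag * a ^ (n + 1 + 1 + 1))) * ag ^ (n + 1)‖ := by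
          rw [hid]
      _ ≤ ‖(1 - p) * (a ^ (n + 1 + 1) - ag * a ^ (n + 1 + 1 + 1))‖ * M ^ (n + 1 + 1) :=
          hbd _ n (n + 1 + 1) (by omega)
      _ ≤ (‖(1 : A) - p‖ * ‖a ^ (n + 1 + 1) - ag * a ^ (n + 1 + 1 + 1)‖) * M ^ (n + 1 + 1) :=
          mul_le_mul_of_nonneg_right (norm_mul_le _ _) (pow_nonneg hM0 _)
      _ = ‖(1 : A) - p‖ * (‖a ^ (n + 1 + 1) - ag * a ^ (n + 1 + 1 + 1)‖ * M ^ (n + 1 + 1)) := by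
          ring
  have hba0 : (b - a) * ag = 0 := by rw [sub_mul, ← h1, hpdef, sub_self]
  have hv3 : (b - a) * p = 0 := by
    refine aux_vanish_pattern ha3 (fun n => norm_nonneg _) hM0 (‖b - a‖) 1 fun n => ?_
    have hid : (b - a) * p = ((b - a) * (a ^ (n + 1) - ag * a ^ (n + 1 + 1))) * ag ^ (n + 1) := by
      rw [hgenA (b - a) hba0 (n + 1), mul_assoc, hpa n]
    calc ‖(b - a) * p‖
        = ‖((b - a) * (a ^ (n + 1) - ag * a ^ (n + 1 + 1))) * ag ^ (n + 1)‖ := by rw [hid]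
      _ ≤ ‖(b - a) * (a ^ (n + 1) - ag * a ^ (n + 1 + 1))‖ * M ^ (n + 1) :=
          hbd _ n (n + 1) le_rfl
      _ ≤ (‖b - a‖ * ‖a ^ (n + 1) - ag * a ^ (n + 1 + 1)‖) * M ^ (n + 1) :=
          mul_le_mul_of_nonneg_right (norm_mul_le _ _) (pow_nonneg hM0 _)
      _ = ‖b - a‖ * (‖a ^ (n + 1) - ag * a ^ (n + 1 + 1)‖ * M ^ (n + 1)) := by ring
  have hv4 : (1 - q) * p = 0 := by
    refine aux_vanish_pattern hb3 (fun n => norm_nonneg _) hM0 (‖(1 : A) - q‖) 1 fun n => ?_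
    have hid : (1 - q) * p = ((1 - q) * (b ^ (n + 1) - bg * b ^ (n + 1 + 1))) * ag ^ (n + 1) := by
      rw [hgenB (1 - q) h1qbg (n + 1), mul_assoc, hpb n]
    calc ‖(1 - q) * p‖
        = ‖((1 - q) * (b ^ (n + 1) - bg * b ^ (n + 1 + 1))) * ag ^ (n + 1)‖ := by rw [hid]
      _ ≤ ‖(1 - q) * (b ^ (n + 1) - bg * b ^ (n + 1 + 1))‖ * M ^ (n + 1) :=
          hbd _ n (n + 1) le_rfl
      _ ≤ (‖(1 : A) - q‖ * ‖b ^ (n + 1) - bg * b ^ (n + 1 + 1)‖) * M ^ (n + 1) :=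
          mul_le_mul_of_nonneg_right (norm_mul_le _ _) (pow_nonneg hM0 _)
      _ = ‖(1 : A) - q‖ * (‖b ^ (n + 1) - bg * b ^ (n + 1 + 1)‖ * M ^ (n + 1)) := by ring
  have hv5 : (1 - p) * (bg * p) = 0 := by
    refine aux_vanish_pattern hb3 (fun n => norm_nonneg _) hM0 (‖(1 : A) - p‖ * M) 1 fun n => ?_
    have t1 : ((1 - p) * b ^ (n + 1)) * ag ^ (n + 1 + 1) = 0 := by
      rw [mul_assoc, pow_succ ag (n + 1), ← mul_assoc (b ^ (n + 1)) (ag ^ (n + 1)) ag,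
        hpb n, hpag]
      exact h1pag
    have t2 : ((1 - p) * (bg * b ^ (n + 1 + 1))) * ag ^ (n + 1 + 1) = (1 - p) * (bg * p) := by
      rw [mul_assoc, mul_assoc bg (b ^ (n + 1 + 1)) (ag ^ (n + 1 + 1)), hpb (n + 1)]
    have ht : ((1 - p) * (b ^ (n + 1) - bg * b ^ (n + 1 + 1))) * ag ^ (n + 1 + 1) =
        -((1 - p) * (bg * p)) := by
      rw [mul_sub, sub_mul, t1, t2, zero_sub]
    have hid : (1 - p) * (bg * p) =
        -(((1 - p) * (b ^ (n + 1) - bg * b ^ (n + 1 + 1))) * ag ^ (n + 1 + 1)) := by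
      rw [ht, neg_neg]
    calc ‖(1 - p) * (bg * p)‖
        = ‖((1 - p) * (b ^ (n + 1) - bg * b ^ (n + 1 + 1))) * ag ^ (n + 1 + 1)‖ := by
          rw [hid, norm_neg]
      _ ≤ ‖(1 - p) * (b ^ (n + 1) - bg * b ^ (n + 1 + 1))‖ * M ^ (n + 1 + 1) :=
          hbd _ (n + 1) (n + 1 + 1) le_rfl
      _ ≤ (‖(1 : A) - p‖ * ‖b ^ (n + 1) - bg * b ^ (n + 1 + 1)‖) * M ^ (n + 1 + 1) :=
          mul_le_mul_of_nonneg_right (norm_mul_le _ _) (pow_nonneg hM0 _)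
      _ = ‖(1 : A) - p‖ * M * (‖b ^ (n + 1) - bg * b ^ (n + 1 + 1)‖ * M ^ (n + 1)) := by
          rw [pow_succ]
          ring
  -- assembling
  have hqp : q * p = p := by
    have h := hv4
    rw [sub_mul, one_mul, sub_eq_zero] at h
    exact h.symm
  have hps : star p = p := ha2
  have hqs : star q = q := hb2
  have hpq : p * q = p := by
    have h := congrArg star hqp
    rw [star_mul, hps, hqs] at h
    exact h
  have hbp : b * p = a * p := by
    have h := hv3
    rw [sub_mul, sub_eq_zero] at h
    exact h
  have hebp : (1 - p) * (b * p) = 0 := by rw [hbp]; exact hv2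
  have hc : (1 - p) * b * (1 - p) = (1 - p) * b := by
    rw [mul_sub, mul_one, mul_assoc, hebp, sub_zero]
  have hw : (1 - p) * bg * (1 - p) = (1 - p) * bg := by
    rw [mul_sub, mul_one, mul_assoc, hv5, sub_zero]
  have hcw : ((1 - p) * b * (1 - p)) * ((1 - p) * bg * (1 - p)) = q - p := by
    rw [hc, hw, ← mul_assoc, hc, mul_assoc, ← hqdef, sub_mul, one_mul, hpq]
  have hrhs : (q - p) * ((1 - p) * bg) = (1 - p) * bg := by
    rw [sub_mul q p ((1 - p) * bg), ← mul_assoc p (1 - p) bg, hpe, zero_mul, sub_zero,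
      ← mul_assoc q (1 - p) bg, mul_sub q 1 p, mul_one, hqp, sub_mul q p bg, hqbg,
      sub_mul (1 : A) p bg, one_mul]
  have hcpow : ∀ n : ℕ, ((1 - p) * b * (1 - p)) ^ (n + 1) = (1 - p) * b ^ (n + 1) := by
    intro n
    induction n with
    | zero => rw [pow_one, pow_one]; exact hc
    | succ n ih =>
      rw [pow_succ' ((1 - p) * b * (1 - p)) (n + 1), ih, hc, ← mul_assoc, hc, mul_assoc,
        ← pow_succ' b (n + 1)]
  have hwc : ∀ n : ℕ,
      ((1 - p) * bg * (1 - p)) * ((1 - p) * b * (1 - p)) ^ (n + 1) = (1 - p) * (bg * b ^ (n + 1)) := by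
    intro n
    rw [hcpow n, hw, ← mul_assoc, hw, mul_assoc]
  refine ⟨(1 - p) * bg * (1 - p), ?_, ?_, ?_, ?_⟩
  · rw [hw, ← mul_assoc, h11]
    exact hw
  · -- w = c * w^2
    rw [pow_two, ← mul_assoc, hcw, hw]
    exact hrhs.symm
  · -- star (c * w) = c * w
    rw [hcw, star_sub, hqs, hps]
  · -- the limit condition
    set K : ℝ := max 1 ‖(1 : A) - p‖ with hKdef
    have hK1 : (1 : ℝ) ≤ K := le_max_left _ _
    have hK0 : (0 : ℝ) ≤ K := by linarith
    apply squeeze_zero'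
      (g := fun n : ℕ => K * ‖b ^ n - bg * b ^ (n + 1)‖ ^ ((1 : ℝ) / n))
    · exact Eventually.of_forall fun n => Real.rpow_nonneg (norm_nonneg _) _
    · filter_upwards [eventually_ge_atTop 1] with n hn
      obtain ⟨m, rfl⟩ : ∃ m, n = m + 1 := ⟨n - 1, by omega⟩
      have hidn : ((1 - p) * b * (1 - p)) ^ (m + 1) -
          ((1 - p) * bg * (1 - p)) * ((1 - p) * b * (1 - p)) ^ (m + 1 + 1) =
          (1 - p) * (b ^ (m + 1) - bg * b ^ (m + 1 + 1)) := by
        rw [hcpow m, hwc (m + 1), mul_sub]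
      have h1n : ‖((1 - p) * b * (1 - p)) ^ (m + 1) -
          ((1 - p) * bg * (1 - p)) * ((1 - p) * b * (1 - p)) ^ (m + 1 + 1)‖ ≤
          K * ‖b ^ (m + 1) - bg * b ^ (m + 1 + 1)‖ := by
        rw [hidn]
        exact le_trans (norm_mul_le _ _)
          (mul_le_mul_of_nonneg_right (le_max_right 1 _) (norm_nonneg _))
      have hexp1 : (1 : ℝ) / ((m + 1 : ℕ) : ℝ) ≤ 1 := by
        rw [div_le_one (by positivity)]
        exact_mod_cast Nat.one_le_iff_ne_zero.mpr (by omega)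
      show ‖((1 - p) * b * (1 - p)) ^ (m + 1) -
          ((1 - p) * bg * (1 - p)) * ((1 - p) * b * (1 - p)) ^ (m + 1 + 1)‖ ^
            ((1 : ℝ) / ((m + 1 : ℕ) : ℝ)) ≤
          K * ‖b ^ (m + 1) - bg * b ^ (m + 1 + 1)‖ ^ ((1 : ℝ) / ((m + 1 : ℕ) : ℝ))
      calc ‖((1 - p) * b * (1 - p)) ^ (m + 1) -
          ((1 - p) * bg * (1 - p)) * ((1 - p) * b * (1 - p)) ^ (m + 1 + 1)‖ ^
            ((1 : ℝ) / ((m + 1 : ℕ) : ℝ))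
          ≤ (K * ‖b ^ (m + 1) - bg * b ^ (m + 1 + 1)‖) ^ ((1 : ℝ) / ((m + 1 : ℕ) : ℝ)) :=
            Real.rpow_le_rpow (norm_nonneg _) h1n (by positivity)
        _ = K ^ ((1 : ℝ) / ((m + 1 : ℕ) : ℝ)) *
            ‖b ^ (m + 1) - bg * b ^ (m + 1 + 1)‖ ^ ((1 : ℝ) / ((m + 1 : ℕ) : ℝ)) :=
            Real.mul_rpow hK0 (norm_nonneg _)
        _ ≤ K * ‖b ^ (m + 1) - bg * b ^ (m + 1 + 1)‖ ^ ((1 : ℝ) / ((m + 1 : ℕ) : ℝ)) := by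
            refine mul_le_mul_of_nonneg_right ?_ (Real.rpow_nonneg (norm_nonneg _) _)
            calc K ^ ((1 : ℝ) / ((m + 1 : ℕ) : ℝ)) ≤ K ^ (1 : ℝ) :=
                  Real.rpow_le_rpow_of_exponent_le hK1 hexp1
              _ = K := Real.rpow_one K
    · simpa using hb3.const_mul K
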